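/- Let f : ℝ^n → [0,∞) be a convex function and ℒ ⊆ ℝ^n an affine subspace such that 𝒞* := argmin_{x∈ℒ} f(x) is nonempty, with minimum value f* := min_{x∈ℒ} f(x), and let x* be the element of 𝒞* of smallest Euclidean norm. For λ ≥ 0 define g(λ) := min_{x∈ℒ} ( ‖x‖² + λ(f(x) − f*) ). Then sup_{λ≥0} g(λ) = ‖x*‖², and consequently lim_{λ→∞} g(λ) = ‖x*‖². -/

import Mathlib

open Filter

/-- Let `f` be convex and nonnegative on ℝⁿ, `L` an affine subspace on which `f`
attains its minimum value `fstar`, and let `xstar` be the minimum-norm element of the argmin set.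
For `l ≥ 0` let `g l` be the minimum over `L` of `‖x‖² + l (f x − fstar)`. Then
`sup_{l ≥ 0} g l = ‖xstar‖²`, and consequently `g l → ‖xstar‖²` as `l → ∞`. -/
theorem statement3 (n : ℕ) (f : EuclideanSpace ℝ (Fin n) → ℝ)
    (hconv : ConvexOn ℝ Set.univ f) (hnonneg : ∀ x, 0 ≤ f x)
    (L : AffineSubspace ℝ (EuclideanSpace ℝ (Fin n)))
    (fstar : ℝ)
    (hfstar : IsLeast (f '' (L : Set (EuclideanSpace ℝ (Fin n)))) fstar)
    (xstar : EuclideanSpace ℝ (Fin n))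
    (hxstarL : xstar ∈ L)
    (hxstarmin : ∀ y ∈ L, f xstar ≤ f y)
    (hxstarnorm : ∀ y ∈ L, (∀ z ∈ L, f y ≤ f z) → ‖xstar‖ ≤ ‖y‖)
    (g : ℝ → ℝ)
    (hg : ∀ l : ℝ, 0 ≤ l →
      IsLeast ((fun x => ‖x‖ ^ 2 + l * (f x - fstar)) ''
        (L : Set (EuclideanSpace ℝ (Fin n)))) (g l)) :
    IsLUB (g '' Set.Ici 0) (‖xstar‖ ^ 2) ∧
      Tendsto g atTop (nhds (‖xstar‖ ^ 2)) := by
  have hfle : ∀ y ∈ L, fstar ≤ f y := fun y hy => hfstar.2 ⟨y, hy, rfl⟩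
  have hfxstar : f xstar = fstar := by
    obtain ⟨y, hy, hyval⟩ := hfstar.1
    exact le_antisymm (hyval ▸ hxstarmin y hy) (hfle xstar hxstarL)
  have hub : ∀ l : ℝ, 0 ≤ l → g l ≤ ‖xstar‖ ^ 2 := by
    intro l hl
    have := (hg l hl).2 ⟨xstar, hxstarL, rfl⟩
    simpa [hfxstar] using this
  have hmono : ∀ a b : ℝ, 0 ≤ a → a ≤ b → g a ≤ g b := by
    intro a b ha hab
    obtain ⟨x, hxL, hxval⟩ := (hg b (ha.trans hab)).1
    have h3 : ‖x‖ ^ 2 + b * (f x - fstar) = g b := hxval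
    have h1 : g a ≤ ‖x‖ ^ 2 + a * (f x - fstar) := (hg a ha).2 ⟨x, hxL, rfl⟩
    have h2 : a * (f x - fstar) ≤ b * (f x - fstar) :=
      mul_le_mul_of_nonneg_right hab (sub_nonneg.2 (hfle x hxL))
    linarith
  have hlub : IsLUB (g '' Set.Ici 0) (‖xstar‖ ^ 2) := by
    constructor
    · rintro _ ⟨l, hl, rfl⟩; exact hub l hl
    · intro M hM
      by_contra hMlt
      push_neg at hMlt
      have hxk : ∀ k : ℕ, ∃ x, x ∈ L ∧ ‖x‖ ^ 2 + (k : ℝ) * (f x - fstar) = g k := by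
        intro k
        obtain ⟨x, hxL', hxv⟩ := (hg k (Nat.cast_nonneg k)).1
        exact ⟨x, hxL', hxv⟩
      choose x hxL hxval using hxk
      have hgleM : ∀ k : ℕ, g (k : ℝ) ≤ M := fun k =>
        hM ⟨(k : ℝ), Set.mem_Ici.2 (Nat.cast_nonneg k), rfl⟩
      have hterm : ∀ k : ℕ, 0 ≤ (k : ℝ) * (f (x k) - fstar) := fun k =>
        mul_nonneg (Nat.cast_nonneg k) (sub_nonneg.2 (hfle _ (hxL k)))
      have hnormle : ∀ k : ℕ, ‖x k‖ ^ 2 ≤ M := by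
        intro k
        nlinarith [hterm k, hxval k, hgleM k]
      have hM0 : 0 ≤ M := le_trans (sq_nonneg ‖x 0‖) (hnormle 0)
      have hball : ∀ k : ℕ, x k ∈ Metric.closedBall (0 : EuclideanSpace ℝ (Fin n)) (Real.sqrt M) := by
        intro k
        simp only [Metric.mem_closedBall, dist_zero_right]
        exact Real.le_sqrt_of_sq_le (hnormle k)
      obtain ⟨a, haball, φ, hφ, hlim⟩ :=
        (isCompact_closedBall (0 : EuclideanSpace ℝ (Fin n)) (Real.sqrt M)).tendsto_subseq hball
      -- a ∈ L
      have haL : a ∈ L := by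
        have hclosed : IsClosed (L : Set (EuclideanSpace ℝ (Fin n))) :=
          L.closed_of_finiteDimensional
        exact hclosed.mem_of_tendsto hlim (Eventually.of_forall fun k => hxL (φ k))
      -- f continuous
      have hfc : Continuous f := by
        exact continuousOn_univ.1 (hconv.continuousOn isOpen_univ)
      -- f a ≤ fstar
      have hfa : f a ≤ fstar := by
        have hflim : Tendsto (fun k => f (x (φ k))) atTop (nhds (f a)) :=
          (hfc.tendsto a).comp hlim
        have hbound : ∀ k : ℕ, 1 ≤ k → f (x (φ k)) ≤ fstar + M / (φ k) := by
          intro k hk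
          have hφk : 1 ≤ φ k := le_trans hk (hφ.le_apply)
          have hφpos : (0 : ℝ) < (φ k : ℝ) := by exact_mod_cast hφk
          have h1 : (φ k : ℝ) * (f (x (φ k)) - fstar) ≤ M := by
            nlinarith [hxval (φ k), hgleM (φ k), sq_nonneg ‖x (φ k)‖]
          rw [div_eq_mul_inv]
          have := mul_le_mul_of_nonneg_right h1 (le_of_lt (inv_pos.2 hφpos))
          rw [mul_comm ((φ k : ℝ)) _, mul_assoc, mul_inv_cancel₀ (ne_of_gt hφpos), mul_one] at this
          linarith
        have hrhs : Tendsto (fun k : ℕ => fstar + M / (φ k : ℝ)) atTop (nhds fstar) := by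
          have h1 : Tendsto (fun k : ℕ => ((φ k : ℝ))) atTop atTop :=
            tendsto_natCast_atTop_atTop.comp hφ.tendsto_atTop
          have h2 : Tendsto (fun k : ℕ => M / (φ k : ℝ)) atTop (nhds 0) :=
            Tendsto.div_atTop tendsto_const_nhds h1
          simpa using (tendsto_const_nhds (x := fstar)).add h2
        have hev : (fun k => f (x (φ k))) ≤ᶠ[atTop] fun k : ℕ => fstar + M / (φ k : ℝ) :=
          eventually_atTop.2 ⟨1, hbound⟩
        simpa using le_of_tendsto_of_tendsto hflim hrhs hev
      -- a minimizes f on L, so ‖xstar‖ ≤ ‖a‖, contradiction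
      have h1 : ‖xstar‖ ≤ ‖a‖ := hxstarnorm a haL (fun z hz => hfa.trans (hfle z hz))
      have h2 : ‖a‖ ≤ Real.sqrt M := by
        simpa [dist_zero_right] using haball
      have h3 : ‖a‖ ^ 2 ≤ M := by
        nlinarith [Real.sq_sqrt hM0, norm_nonneg a, Real.sqrt_nonneg M]
      nlinarith [norm_nonneg xstar, norm_nonneg a]
  refine ⟨hlub, ?_⟩
  rw [Metric.tendsto_atTop]
  intro ε hε
  obtain ⟨_, ⟨l0, hl0, rfl⟩, hgt⟩ :=
    hlub.exists_between (show ‖xstar‖ ^ 2 - ε < ‖xstar‖ ^ 2 by linarith)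
  refine ⟨l0, fun l hl => ?_⟩
  have hl0' : (0:ℝ) ≤ l0 := hl0
  have := hmono l0 l hl0' hl
  have := hub l (hl0'.trans hl)
  rw [Real.dist_eq, abs_lt]
  constructor <;> linarith
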